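/- Let p > 1 and δ > 0, and adopt the random-design and kernel assumptions below. Fix x ∈ (a,b) and (α_0, α_1) ∈ ℝ², and set S_{n} := α_0·V_{0,n} + α_1·V_{1,n}. Then E[S_n] = 0 for every n, and Var(S_n) = (α_0²·R(K) + α_1²·μ_2(K²))·f(x)·E[|ε_1|^{2p−2}] + O(h_n) as n → ∞; that is, there exist C > 0 and N such that for all n ≥ N, |Var(S_n) − (α_0²·R(K) + α_1²·μ_2(K²))·f(x)·E[|ε_1|^{2p−2}]| ≤ C·h_n. -/

import Mathlib

open MeasureTheory ProbabilityTheory Filter Real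

/-- Convergence in distribution (weak convergence of laws) of a sequence of real
random variables to a limiting distribution `μ`, phrased via bounded continuous
test functions. -/
def TendstoInDistribution {Ω : Type*} [MeasurableSpace Ω] (P : Measure Ω)
    (V : ℕ → Ω → ℝ) (μ : Measure ℝ) : Prop :=
  ∀ g : BoundedContinuousFunction ℝ ℝ,
    Tendsto (fun n => ∫ ω, g (V n ω) ∂P) atTop (nhds (∫ t, g t ∂μ))

/-- Rescaled kernel `K_h(u) = h⁻¹ K(u/h)`. -/
noncomputable def Kh (K : ℝ → ℝ) (h u : ℝ) : ℝ := h⁻¹ * K (u / h)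

open scoped ENNReal NNReal

section AuxLemmas

lemma aux_measurable_sign : Measurable Real.sign := by
  have h : Real.sign = fun r : ℝ => if r < 0 then (-1:ℝ) else if 0 < r then 1 else 0 := by
    funext r; rfl
  rw [h]
  exact Measurable.ite (measurableSet_lt measurable_id measurable_const) measurable_const
    (Measurable.ite (measurableSet_lt measurable_const measurable_id) measurable_const
      measurable_const)

lemma aux_abs_sign (r : ℝ) : |Real.sign r| ≤ 1 := by
  rcases Real.sign_apply_eq r with h | h | h <;> rw [h] <;> norm_num

lemma aux_sign_sq {r : ℝ} (hr : r ≠ 0) : Real.sign r * Real.sign r = 1 := by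
  rcases Real.sign_apply_eq_of_ne_zero r hr with h | h <;> rw [h] <;> norm_num

lemma aux_rpow_le {x r s : ℝ} (hx : 0 ≤ x) (hr : 0 ≤ r) (hrs : r ≤ s) :
    x ^ r ≤ 1 + x ^ s := by
  rcases le_or_gt x 1 with h | h
  · have h1 : x ^ r ≤ 1 := Real.rpow_le_one hx h hr
    have h2 : (0:ℝ) ≤ x ^ s := Real.rpow_nonneg hx s
    linarith
  · have h1 : x ^ r ≤ x ^ s := Real.rpow_le_rpow_of_exponent_le h.le hrs
    linarith

lemma aux_integral_odd (g : ℝ → ℝ) (hg : ∀ u, g (-u) = - g u) : (∫ u, g u) = 0 := by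
  have h1 : (∫ u, g (-u)) = ∫ u, g u := integral_neg_eq_self g volume
  have h2 : (∫ u, g (-u)) = - ∫ u, g u := by
    simp_rw [hg]; exact integral_neg g
  linarith [h1.symm.trans h2]

lemma aux_integrable_mul_of_sq {Ω : Type*} [MeasurableSpace Ω] {P : Measure Ω} {g₁ g₂ : Ω → ℝ}
    (h1 : AEStronglyMeasurable g₁ P) (h2 : AEStronglyMeasurable g₂ P)
    (hs1 : Integrable (fun ω => g₁ ω ^ 2) P) (hs2 : Integrable (fun ω => g₂ ω ^ 2) P) :
    Integrable (fun ω => g₁ ω * g₂ ω) P := by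
  refine (hs1.add hs2).mono' (h1.mul h2) (ae_of_all _ fun ω => ?_)
  simp only [Real.norm_eq_abs, Pi.add_apply]
  rw [abs_mul]
  nlinarith [sq_nonneg (|g₁ ω| - |g₂ ω|), sq_abs (g₁ ω), sq_abs (g₂ ω), abs_nonneg (g₁ ω),
    abs_nonneg (g₂ ω)]

lemma aux_integrable_indicator (B : ℝ) :
    Integrable (Set.indicator (Set.Icc (-1:ℝ) 1) (fun _ => B)) volume := by
  rw [integrable_indicator_iff measurableSet_Icc]
  exact integrableOn_const (by simp [Real.volume_Icc])

lemma aux_integral_indicator (B : ℝ) :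
    (∫ u, Set.indicator (Set.Icc (-1:ℝ) 1) (fun _ => B) u) = 2 * B := by
  rw [integral_indicator_const B measurableSet_Icc]
  rw [Real.volume_real_Icc]
  norm_num [ENNReal.toReal_ofReal]

lemma aux_integrable_of_indicator_bound {g : ℝ → ℝ} {B : ℝ}
    (hg : AEStronglyMeasurable g volume)
    (hb : ∀ u, ‖g u‖ ≤ Set.indicator (Set.Icc (-1:ℝ) 1) (fun _ => B) u) :
    Integrable g volume :=
  (aux_integrable_indicator B).mono' hg (ae_of_all _ hb)

end AuxLemmas

set_option maxHeartbeats 2000000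

/-- For fixed `(α₀, α₁)`, the linear combination
`Sₙ = α₀·V₀ₙ + α₁·V₁ₙ` has mean zero for every `n`, and its variance equals
`(α₀²·R(K) + α₁²·μ₂(K²))·f(x)·E[|ε₁|^{2p-2}] + O(hₙ)`. -/
theorem statement1
    {Ω : Type*} [MeasurableSpace Ω] (P : Measure Ω) [IsProbabilityMeasure P]
    (p δ : ℝ) (hp : 1 < p) (hδ : 0 < δ)
    (a b : ℝ) (f K : ℝ → ℝ) (X ε : ℕ → Ω → ℝ) (hn : ℕ → ℝ)
    -- kernel assumptions
    (hK_meas : Measurable K) (hK_nonneg : ∀ u, 0 ≤ K u)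
    (hK_bdd : ∃ C, ∀ u, K u ≤ C) (hK_symm : ∀ u, K (-u) = K u)
    (hK_supp : Function.support K ⊆ Set.Icc (-1) 1)
    (hK_int : (∫ u, K u) = 1)
    -- random design: i.i.d. with density f supported on (a,b)
    (hX_meas : ∀ i, Measurable (X i))
    (hX_dist : ∀ i, Measure.map (X i) P
      = (volume : Measure ℝ).withDensity (fun t => ENNReal.ofReal (f t)))
    (hX_indep : iIndepFun X P)
    (hf_nonneg : ∀ t, 0 ≤ f t)
    (hf_supp : Function.support f ⊆ Set.Ioo a b)
    (hf_diff : Differentiable ℝ f)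
    (hf_deriv_bdd : ∃ C, ∀ t, |deriv f t| ≤ C)
    -- errors: i.i.d., independent of the design, with the moment conditions
    (hε_meas : ∀ i, Measurable (ε i))
    (hε_ident : ∀ i, Measure.map (ε i) P = Measure.map (ε 0) P)
    (hε_indep : iIndepFun ε P)
    (hXε_indep : IndepFun (fun ω i => X i ω) (fun ω i => ε i ω) P)
    (hε_mom1 : (∫ ω, |ε 0 ω| ^ (p - 1) * Real.sign (ε 0 ω) ∂P) = 0)
    (hε_mom2 : Integrable (fun ω => |ε 0 ω| ^ ((p - 1) * (2 + δ))) P)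
    -- bandwidths
    (hh_pos : ∀ n, 0 < hn n)
    (hh_to0 : Tendsto hn atTop (nhds 0))
    (hnh : Tendsto (fun n : ℕ => (n : ℝ) * hn n) atTop atTop)
    -- evaluation point and coefficients
    (x : ℝ) (hx : x ∈ Set.Ioo a b) (α₀ α₁ : ℝ)
    -- the linear combination Sₙ = α₀·V₀ₙ + α₁·V₁ₙ
    (S : ℕ → Ω → ℝ)
    (hS : ∀ n ω, S n ω =
      α₀ * (Real.sqrt (hn n / n) *
        ∑ i ∈ Finset.range n,
          |ε i ω| ^ (p - 1) * Real.sign (ε i ω) * Kh K (hn n) (X i ω - x)) +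
      α₁ * ((hn n)⁻¹ * Real.sqrt (hn n / n) *
        ∑ i ∈ Finset.range n,
          (X i ω - x) * (|ε i ω| ^ (p - 1) * Real.sign (ε i ω)) *
            Kh K (hn n) (X i ω - x))) :
    (∀ n, (∫ ω, S n ω ∂P) = 0) ∧
    ∃ C > (0 : ℝ), ∃ N : ℕ, ∀ n ≥ N,
      |variance (S n) P -
        (α₀ ^ 2 * (∫ u, (K u) ^ 2) + α₁ ^ 2 * (∫ u, u ^ 2 * (K u) ^ 2)) *
          f x * (∫ ω, |ε 0 ω| ^ (2 * p - 2) ∂P)| ≤ C * hn n := by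
  classical
  obtain ⟨CK, hCK⟩ := hK_bdd
  have hCK0 : 0 ≤ CK := (hK_nonneg 0).trans (hCK 0)
  obtain ⟨Cf, hCf⟩ := hf_deriv_bdd
  have hCf0 : 0 ≤ Cf := (abs_nonneg _).trans (hCf 0)
  have hf_cont : Continuous f := hf_diff.continuous
  have hf_meas : Measurable f := hf_cont.measurable
  have hf_lip : ∀ y z : ℝ, |f y - f z| ≤ Cf * |y - z| := by
    have hlip : LipschitzWith Cf.toNNReal f := by
      apply lipschitzWith_of_nnnorm_deriv_le hf_diff
      intro t
      rw [← NNReal.coe_le_coe]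
      simpa [Real.coe_toNNReal _ hCf0, Real.norm_eq_abs] using hCf t
    intro y z
    have h := hlip.dist_le_mul y z
    rwa [Real.dist_eq, Real.dist_eq, Real.coe_toNNReal _ hCf0] at h
  have hp1 : (0:ℝ) < p - 1 := by linarith
  set φ : ℝ → ℝ := fun t => |t| ^ (p - 1) * Real.sign t with hφ_def
  have hφ_meas : Measurable φ := (measurable_abs.pow measurable_const).mul aux_measurable_sign
  set ψ : ℕ → Ω → ℝ := fun i ω => φ (ε i ω) with hψ_def
  have hψ_meas : ∀ i, Measurable (ψ i) := fun i => hφ_meas.comp (hε_meas i)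
  have hφ_sq : ∀ t : ℝ, φ t * φ t = |t| ^ (2*p - 2) := by
    intro t
    by_cases ht : t = 0
    · subst ht
      simp [hφ_def, Real.sign_zero, Real.zero_rpow (show 2*p-2 ≠ 0 by intro h; nlinarith)]
    · have habs : 0 < |t| := abs_pos.2 ht
      have h1 : φ t * φ t = (|t| ^ (p-1) * |t| ^ (p-1)) * (Real.sign t * Real.sign t) := by
        simp only [hφ_def]; ring
      rw [h1, aux_sign_sq ht, mul_one, ← Real.rpow_add habs,
        show p - 1 + (p - 1) = 2*p - 2 by ring]
  have hφ_abs : ∀ t : ℝ, |φ t| ≤ |t| ^ (p - 1) := by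
    intro t
    simp only [hφ_def]
    rw [abs_mul, abs_of_nonneg (Real.rpow_nonneg (abs_nonneg t) _)]
    exact mul_le_of_le_one_right (Real.rpow_nonneg (abs_nonneg t) _) (aux_abs_sign t)
  -- moment transfer
  have hmom : ∀ g : ℝ → ℝ, Measurable g → ∀ i,
      (∫ ω, g (ε i ω) ∂P) = ∫ ω, g (ε 0 ω) ∂P := by
    intro g hg i
    rw [← integral_map (hε_meas i).aemeasurable hg.aestronglyMeasurable, hε_ident i,
      integral_map (hε_meas 0).aemeasurable hg.aestronglyMeasurable]
  have hint_trans : ∀ g : ℝ → ℝ, Measurable g → Integrable (fun ω => g (ε 0 ω)) P →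
      ∀ i, Integrable (fun ω => g (ε i ω)) P := by
    intro g hg h0 i
    have h1 : Integrable g (Measure.map (ε 0) P) :=
      (integrable_map_measure hg.aestronglyMeasurable (hε_meas 0).aemeasurable).2 h0
    rw [← hε_ident i] at h1
    exact (integrable_map_measure hg.aestronglyMeasurable (hε_meas i).aemeasurable).1 h1
  have hq_meas : Measurable (fun t : ℝ => |t| ^ ((p-1)*(2+δ))) :=
    measurable_abs.pow measurable_const
  have h2p_meas : Measurable (fun t : ℝ => |t| ^ (2*p-2)) :=
    measurable_abs.pow measurable_const
  have hq_int : ∀ i, Integrable (fun ω => |ε i ω| ^ ((p-1)*(2+δ))) P :=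
    hint_trans _ hq_meas hε_mom2
  have h2p_int0 : Integrable (fun ω => |ε 0 ω| ^ (2*p-2)) P := by
    refine ((integrable_const (1:ℝ)).add (hq_int 0)).mono'
      (h2p_meas.comp (hε_meas 0)).aestronglyMeasurable (ae_of_all _ fun ω => ?_)
    have h := aux_rpow_le (x := |ε 0 ω|) (r := 2*p-2) (s := (p-1)*(2+δ)) (abs_nonneg _)
      (by linarith) (by nlinarith)
    simp only [Real.norm_eq_abs, Pi.add_apply]
    rw [abs_of_nonneg (Real.rpow_nonneg (abs_nonneg _) _)]
    exact h
  have h2p_int : ∀ i, Integrable (fun ω => |ε i ω| ^ (2*p-2)) P :=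
    hint_trans _ h2p_meas h2p_int0
  have hψsq_int : ∀ i, Integrable (fun ω => ψ i ω ^ 2) P := by
    intro i
    have h1 : (fun ω => ψ i ω ^ 2) = fun ω => |ε i ω| ^ (2*p-2) := by
      funext ω; rw [sq]; exact hφ_sq (ε i ω)
    rw [h1]; exact h2p_int i
  have hψ_memℒ2 : ∀ i, MemLp (ψ i) 2 P := fun i =>
    (memLp_two_iff_integrable_sq (hψ_meas i).aestronglyMeasurable).2 (hψsq_int i)
  have hψ_int : ∀ i, Integrable (ψ i) P := fun i => (hψ_memℒ2 i).integrable one_le_two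
  have hψ_mean : ∀ i, (∫ ω, ψ i ω ∂P) = 0 := fun i => (hmom φ hφ_meas i).trans hε_mom1
  set m₂ : ℝ := ∫ ω, |ε 0 ω| ^ (2*p - 2) ∂P with hm₂_def
  have hm₂_nonneg : 0 ≤ m₂ :=
    integral_nonneg fun ω => Real.rpow_nonneg (abs_nonneg _) _
  have hψψ_mean : ∀ i, (∫ ω, ψ i ω * ψ i ω ∂P) = m₂ := by
    intro i
    have h1 : (∫ ω, ψ i ω * ψ i ω ∂P) = ∫ ω, |ε i ω| ^ (2*p-2) ∂P :=
      integral_congr_ae (ae_of_all _ fun ω => hφ_sq (ε i ω))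
    rw [h1]; exact hmom _ h2p_meas i
  have hψψ_cross : ∀ i j, i ≠ j → (∫ ω, ψ i ω * ψ j ω ∂P) = 0 := by
    intro i j hij
    have hind : IndepFun (ψ i) (ψ j) P := (hε_indep.indepFun hij).comp hφ_meas hφ_meas
    have h2 : (∫ ω, ψ i ω * ψ j ω ∂P) = (∫ ω, ψ i ω ∂P) * ∫ ω, ψ j ω ∂P :=
      hind.integral_fun_mul_eq_mul_integral (hψ_meas i).aestronglyMeasurable (hψ_meas j).aestronglyMeasurable
    rw [h2, hψ_mean i, zero_mul]
  -- design side
  set A : ℝ := |α₀| + |α₁| with hA_def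
  have hA0 : 0 ≤ A := by positivity
  set g : ℝ → ℝ → ℝ := fun h t => (α₀ + α₁ * ((t - x)/h)) * (h⁻¹ * K ((t - x)/h)) with hg_def
  have hg_meas : ∀ h, Measurable (g h) := by
    intro h
    have m1 : Measurable (fun t : ℝ => (t - x)/h) :=
      (measurable_id.sub measurable_const).div_const h
    exact (measurable_const.add (m1.const_mul α₁)).mul ((hK_meas.comp m1).const_mul h⁻¹)
  have hg_bound : ∀ h : ℝ, 0 < h → ∀ t, |g h t| ≤ A * (h⁻¹ * CK) := by
    intro h hh t
    by_cases hK0 : K ((t - x)/h) = 0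
    · simp only [hg_def, hK0, mul_zero, abs_zero]
      exact mul_nonneg hA0 (mul_nonneg (inv_nonneg.2 hh.le) hCK0)
    · have hmem : (t - x)/h ∈ Set.Icc (-1:ℝ) 1 := hK_supp (Function.mem_support.2 hK0)
      have hu : |(t - x)/h| ≤ 1 := abs_le.2 ⟨hmem.1, hmem.2⟩
      simp only [hg_def]
      rw [abs_mul]
      have hb1 : |α₀ + α₁ * ((t - x)/h)| ≤ A := by
        calc |α₀ + α₁ * ((t - x)/h)| ≤ |α₀| + |α₁ * ((t - x)/h)| := abs_add_le _ _
          _ = |α₀| + |α₁| * |(t - x)/h| := by rw [abs_mul]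
          _ ≤ |α₀| + |α₁| * 1 := by
              exact add_le_add_right (mul_le_mul_of_nonneg_left hu (abs_nonneg α₁)) _
          _ = A := by rw [hA_def, mul_one]
      have hb2 : |h⁻¹ * K ((t - x)/h)| ≤ h⁻¹ * CK := by
        rw [abs_mul, abs_of_nonneg (inv_nonneg.2 hh.le), abs_of_nonneg (hK_nonneg _)]
        exact mul_le_mul_of_nonneg_left (hCK _) (inv_nonneg.2 hh.le)
      exact mul_le_mul hb1 hb2 (abs_nonneg _) hA0
  have hXi_indep_εi : ∀ i, IndepFun (X i) (ε i) P := fun i =>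
    hXε_indep.comp (measurable_pi_apply i) (measurable_pi_apply i)
  have hY_mean : ∀ (h : ℝ) (i : ℕ), (∫ ω, g h (X i ω) * ψ i ω ∂P) = 0 := by
    intro h i
    have hind : IndepFun (fun ω => g h (X i ω)) (ψ i) P :=
      (hXi_indep_εi i).comp (hg_meas h) hφ_meas
    have heq : (∫ ω, g h (X i ω) * ψ i ω ∂P)
        = (∫ ω, g h (X i ω) ∂P) * ∫ ω, ψ i ω ∂P :=
      hind.integral_fun_mul_eq_mul_integral ((hg_meas h).comp (hX_meas i)).aestronglyMeasurable
        (hψ_meas i).aestronglyMeasurable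
    rw [heq, hψ_mean i, mul_zero]
  have hY_int : ∀ (h : ℝ), 0 < h → ∀ i,
      Integrable (fun ω => g h (X i ω) * ψ i ω) P := by
    intro h hh i
    refine ((hψ_int i).abs.const_mul (A * (h⁻¹ * CK))).mono'
      (((hg_meas h).comp (hX_meas i)).mul (hψ_meas i)).aestronglyMeasurable
      (ae_of_all _ fun ω => ?_)
    simp only [Real.norm_eq_abs]
    rw [abs_mul]
    exact mul_le_mul_of_nonneg_right (hg_bound h hh (X i ω)) (abs_nonneg _)
  have hY_mem : ∀ (h : ℝ), 0 < h → ∀ i,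
      MemLp (fun ω => g h (X i ω) * ψ i ω) 2 P := by
    intro h hh i
    refine (hψ_memℒ2 i).of_le_mul (c := A * (h⁻¹ * CK))
      (((hg_meas h).comp (hX_meas i)).mul (hψ_meas i)).aestronglyMeasurable
      (ae_of_all _ fun ω => ?_)
    simp only [Real.norm_eq_abs]
    rw [abs_mul]
    exact mul_le_mul_of_nonneg_right (hg_bound h hh (X i ω)) (abs_nonneg _)
  have hXdist_int : ∀ (G : ℝ → ℝ), Measurable G → ∀ i,
      (∫ ω, G (X i ω) ∂P) = ∫ t, f t * G t := by
    intro G hGm i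
    rw [← integral_map (hX_meas i).aemeasurable hGm.aestronglyMeasurable, hX_dist i]
    have h1 : (fun t => ENNReal.ofReal (f t)) = fun t => ((f t).toNNReal : ℝ≥0∞) := rfl
    rw [h1, integral_withDensity_eq_integral_smul hf_meas.real_toNNReal]
    congr 1; funext t
    rw [NNReal.smul_def, Real.coe_toNNReal _ (hf_nonneg t), smul_eq_mul]
  have hYY_cross : ∀ (h : ℝ) (i j : ℕ), i ≠ j →
      (∫ ω, (g h (X i ω) * ψ i ω) * (g h (X j ω) * ψ j ω) ∂P) = 0 := by
    intro h i j hij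
    have hre : ∀ ω, (g h (X i ω) * ψ i ω) * (g h (X j ω) * ψ j ω)
        = (g h (X i ω) * g h (X j ω)) * (ψ i ω * ψ j ω) := fun ω => by ring
    rw [integral_congr_ae (ae_of_all _ hre)]
    have hΦ : Measurable (fun v : ℕ → ℝ => g h (v i) * g h (v j)) :=
      ((hg_meas h).comp (measurable_pi_apply i)).mul ((hg_meas h).comp (measurable_pi_apply j))
    have hΨ : Measurable (fun v : ℕ → ℝ => φ (v i) * φ (v j)) :=
      (hφ_meas.comp (measurable_pi_apply i)).mul (hφ_meas.comp (measurable_pi_apply j))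
    have hind : IndepFun (fun ω => g h (X i ω) * g h (X j ω))
        (fun ω => ψ i ω * ψ j ω) P := hXε_indep.comp hΦ hΨ
    have heq : (∫ ω, (g h (X i ω) * g h (X j ω)) * (ψ i ω * ψ j ω) ∂P)
        = (∫ ω, g h (X i ω) * g h (X j ω) ∂P) * ∫ ω, ψ i ω * ψ j ω ∂P :=
      hind.integral_fun_mul_eq_mul_integral
        (((hg_meas h).comp (hX_meas i)).mul ((hg_meas h).comp (hX_meas j))).aestronglyMeasurable
        ((hψ_meas i).mul (hψ_meas j)).aestronglyMeasurable
    rw [heq, hψψ_cross i j hij, mul_zero]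
  have hYY_diag : ∀ (h : ℝ) (i : ℕ),
      (∫ ω, (g h (X i ω) * ψ i ω) * (g h (X i ω) * ψ i ω) ∂P)
        = (∫ t, f t * (g h t * g h t)) * m₂ := by
    intro h i
    have hre : ∀ ω, (g h (X i ω) * ψ i ω) * (g h (X i ω) * ψ i ω)
        = (g h (X i ω) * g h (X i ω)) * (ψ i ω * ψ i ω) := fun ω => by ring
    rw [integral_congr_ae (ae_of_all _ hre)]
    have hind : IndepFun (fun ω => g h (X i ω) * g h (X i ω))
        (fun ω => ψ i ω * ψ i ω) P :=
      (hXi_indep_εi i).comp ((hg_meas h).mul (hg_meas h)) (hφ_meas.mul hφ_meas)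
    have heq : (∫ ω, (g h (X i ω) * g h (X i ω)) * (ψ i ω * ψ i ω) ∂P)
        = (∫ ω, g h (X i ω) * g h (X i ω) ∂P) * ∫ ω, ψ i ω * ψ i ω ∂P :=
      hind.integral_fun_mul_eq_mul_integral
        (((hg_meas h).comp (hX_meas i)).mul ((hg_meas h).comp (hX_meas i))).aestronglyMeasurable
        ((hψ_meas i).mul (hψ_meas i)).aestronglyMeasurable
    rw [heq, hψψ_mean i, hXdist_int (fun t => g h t * g h t) ((hg_meas h).mul (hg_meas h)) i]
  -- rewrite S n in terms of g and ψ
  have hSn : ∀ n : ℕ, S n = fun ω => Real.sqrt (hn n / n) *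
      ∑ i ∈ Finset.range n, g (hn n) (X i ω) * ψ i ω := by
    intro n
    funext ω
    rw [hS n ω]
    have h1 : ∑ i ∈ Finset.range n, g (hn n) (X i ω) * ψ i ω
        = α₀ * (∑ i ∈ Finset.range n,
            |ε i ω| ^ (p - 1) * Real.sign (ε i ω) * Kh K (hn n) (X i ω - x))
          + (α₁ * (hn n)⁻¹) * (∑ i ∈ Finset.range n,
            (X i ω - x) * (|ε i ω| ^ (p - 1) * Real.sign (ε i ω)) *
              Kh K (hn n) (X i ω - x)) := by
      rw [Finset.mul_sum, Finset.mul_sum, ← Finset.sum_add_distrib]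
      refine Finset.sum_congr rfl fun i _ => ?_
      simp only [hg_def, hψ_def, hφ_def, Kh]
      ring
    rw [h1]
    ring
  have hmean : ∀ n, (∫ ω, S n ω ∂P) = 0 := by
    intro n
    have h0 : (∫ ω, S n ω ∂P) = ∫ ω, Real.sqrt (hn n / n) *
        ∑ i ∈ Finset.range n, g (hn n) (X i ω) * ψ i ω ∂P := by
      refine integral_congr_ae (ae_of_all _ fun ω => ?_)
      rw [hSn n]
    rw [h0, integral_const_mul,
      integral_finset_sum _ (fun i _ => hY_int (hn n) (hh_pos n) i),
      Finset.sum_eq_zero fun i _ => hY_mean (hn n) i, mul_zero]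
  have hvar : ∀ n : ℕ, 1 ≤ n → variance (S n) P
      = hn n * ((∫ t, f t * (g (hn n) t * g (hn n) t)) * m₂) := by
    intro n hn1
    have hh : 0 < hn n := hh_pos n
    have hnR : (0:ℝ) < (n:ℝ) := by exact_mod_cast hn1
    have hne : (n:ℝ) ≠ 0 := ne_of_gt hnR
    have hTmem : MemLp (fun ω => ∑ i ∈ Finset.range n, g (hn n) (X i ω) * ψ i ω) 2 P :=
      memLp_finsetSum (Finset.range n) (fun i _ => hY_mem (hn n) hh i)
    have hSmem : MemLp (S n) 2 P := by
      rw [hSn n]; exact hTmem.const_mul _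
    have hvd := variance_eq_sub hSmem
    have hm0 : P[S n] = 0 := hmean n
    rw [hm0] at hvd
    have hvd2 : variance (S n) P = ∫ ω, (S n ω)^2 ∂P := by
      rw [hvd]; norm_num
    have hc2 : Real.sqrt (hn n / (n:ℝ)) ^ 2 = hn n / n := Real.sq_sqrt (by positivity)
    have hsq : ∀ ω, (S n ω)^2 = (hn n / n) *
        ((∑ i ∈ Finset.range n, g (hn n) (X i ω) * ψ i ω) *
         (∑ j ∈ Finset.range n, g (hn n) (X j ω) * ψ j ω)) := by
      intro ω
      rw [hSn n]
      rw [mul_pow, hc2]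
      ring
    have hYYint : ∀ i j : ℕ, Integrable
        (fun ω => (g (hn n) (X i ω) * ψ i ω) * (g (hn n) (X j ω) * ψ j ω)) P := fun i j =>
      aux_integrable_mul_of_sq
        (((hg_meas _).comp (hX_meas i)).mul (hψ_meas i)).aestronglyMeasurable
        (((hg_meas _).comp (hX_meas j)).mul (hψ_meas j)).aestronglyMeasurable
        ((hY_mem (hn n) hh i).integrable_sq) ((hY_mem (hn n) hh j).integrable_sq)
    have h1 : (∫ ω, (S n ω)^2 ∂P) = (hn n / n) *
        ∫ ω, (∑ i ∈ Finset.range n, g (hn n) (X i ω) * ψ i ω) *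
             (∑ j ∈ Finset.range n, g (hn n) (X j ω) * ψ j ω) ∂P := by
      rw [integral_congr_ae (ae_of_all _ hsq), integral_const_mul]
    have h2 : (∫ ω, (∑ i ∈ Finset.range n, g (hn n) (X i ω) * ψ i ω) *
             (∑ j ∈ Finset.range n, g (hn n) (X j ω) * ψ j ω) ∂P)
        = ∑ i ∈ Finset.range n, ∑ j ∈ Finset.range n,
            ∫ ω, (g (hn n) (X i ω) * ψ i ω) * (g (hn n) (X j ω) * ψ j ω) ∂P := by
      simp_rw [Finset.sum_mul_sum]
      rw [integral_finset_sum _ (fun i _ => integrable_finset_sum _ (fun j _ => hYYint i j))]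
      exact Finset.sum_congr rfl fun i _ => integral_finset_sum _ (fun j _ => hYYint i j)
    have h3 : ∀ i ∈ Finset.range n, (∑ j ∈ Finset.range n,
          ∫ ω, (g (hn n) (X i ω) * ψ i ω) * (g (hn n) (X j ω) * ψ j ω) ∂P)
        = (∫ t, f t * (g (hn n) t * g (hn n) t)) * m₂ := by
      intro i hi
      rw [Finset.sum_eq_single i
        (fun j _ hji => hYY_cross (hn n) i j (Ne.symm hji))
        (fun hni => absurd hi hni)]
      exact hYY_diag (hn n) i
    rw [hvd2, h1, h2, Finset.sum_congr rfl h3, Finset.sum_const, Finset.card_range,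
      nsmul_eq_mul]
    field_simp
  -- analytic part
  set Q : ℝ → ℝ := fun u => (α₀ + α₁*u) * (α₀ + α₁*u) * (K u * K u) with hQ_def
  have hQ_meas : Measurable Q :=
    ((measurable_const.add (measurable_id.const_mul α₁)).mul
      (measurable_const.add (measurable_id.const_mul α₁))).mul (hK_meas.mul hK_meas)
  have hQ_zero : ∀ u, u ∉ Set.Icc (-1:ℝ) 1 → Q u = 0 := by
    intro u hu
    have hK0 : K u = 0 := by
      by_contra hne
      exact hu (hK_supp (Function.mem_support.2 hne))
    simp only [hQ_def, hK0, mul_zero, zero_mul]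
  have hQ_bd : ∀ u, |Q u| ≤ Set.indicator (Set.Icc (-1:ℝ) 1) (fun _ => A^2 * CK^2) u := by
    intro u
    by_cases hu : u ∈ Set.Icc (-1:ℝ) 1
    · rw [Set.indicator_of_mem hu]
      have h1 : |α₀ + α₁ * u| ≤ A := by
        calc |α₀ + α₁*u| ≤ |α₀| + |α₁*u| := abs_add_le _ _
          _ = |α₀| + |α₁| * |u| := by rw [abs_mul]
          _ ≤ |α₀| + |α₁| * 1 := add_le_add_right
              (mul_le_mul_of_nonneg_left (abs_le.2 ⟨hu.1, hu.2⟩) (abs_nonneg _)) _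
          _ = A := by rw [hA_def, mul_one]
      have h2 : |K u| ≤ CK := by rw [abs_of_nonneg (hK_nonneg u)]; exact hCK u
      have h3 : |α₀+α₁*u| * |α₀+α₁*u| ≤ A * A := mul_le_mul h1 h1 (abs_nonneg _) hA0
      have h4 : |K u| * |K u| ≤ CK * CK := mul_le_mul h2 h2 (abs_nonneg _) hCK0
      have h5 : |Q u| = |α₀+α₁*u| * |α₀+α₁*u| * (|K u| * |K u|) := by
        simp only [hQ_def, abs_mul]
      rw [h5]
      calc |α₀+α₁*u| * |α₀+α₁*u| * (|K u| * |K u|) ≤ (A*A) * (CK*CK) :=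
          mul_le_mul h3 h4 (mul_nonneg (abs_nonneg _) (abs_nonneg _)) (mul_nonneg hA0 hA0)
        _ = A^2 * CK^2 := by ring
    · rw [Set.indicator_of_notMem hu, hQ_zero u hu]
      simp
  have hQ_int : Integrable Q :=
    aux_integrable_of_indicator_bound hQ_meas.aestronglyMeasurable
      (fun u => by simpa [Real.norm_eq_abs] using hQ_bd u)
  have hKKb : ∀ (W : ℝ → ℝ), Measurable W → (∀ u, u ∈ Set.Icc (-1:ℝ) 1 → |W u| ≤ 1) →
      Integrable (fun u => W u * (K u * K u)) := by
    intro W hWm hWb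
    refine aux_integrable_of_indicator_bound (B := CK^2)
      (hWm.mul (hK_meas.mul hK_meas)).aestronglyMeasurable (fun u => ?_)
    by_cases hu : u ∈ Set.Icc (-1:ℝ) 1
    · rw [Set.indicator_of_mem hu]
      have h2 : |K u| ≤ CK := by rw [abs_of_nonneg (hK_nonneg u)]; exact hCK u
      have h4 : |K u| * |K u| ≤ CK * CK := mul_le_mul h2 h2 (abs_nonneg _) hCK0
      simp only [Real.norm_eq_abs, abs_mul]
      calc |W u| * (|K u| * |K u|) ≤ 1 * (CK*CK) :=
          mul_le_mul (hWb u hu) h4 (mul_nonneg (abs_nonneg _) (abs_nonneg _)) zero_le_one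
        _ = CK^2 := by ring
    · have hK0 : K u = 0 := by
        by_contra hne; exact hu (hK_supp (Function.mem_support.2 hne))
      rw [Set.indicator_of_notMem hu]
      simp [hK0]
  have hI1 : Integrable (fun u : ℝ => K u * K u) := by
    have h := hKKb (fun _ => 1) measurable_const (fun u _ => by norm_num)
    simpa using h
  have hIu : Integrable (fun u : ℝ => u * (K u * K u)) :=
    hKKb id measurable_id (fun u hu => abs_le.2 ⟨hu.1, hu.2⟩)
  have hIu2 : Integrable (fun u : ℝ => u^2 * (K u * K u)) :=
    hKKb (fun u => u^2) (measurable_id.pow_const 2) (fun u hu => by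
      rw [abs_of_nonneg (sq_nonneg u)]; nlinarith [hu.1, hu.2])
  have hodd : (∫ u, u * (K u * K u)) = 0 :=
    aux_integral_odd _ (fun u => by rw [hK_symm u]; ring)
  have hQint_eq : (∫ u, Q u)
      = α₀^2 * (∫ u, K u * K u) + α₁^2 * (∫ u, u^2 * (K u * K u)) := by
    have hexp : ∀ u, Q u = (α₀^2 * (K u * K u) + (2*α₀*α₁) * (u * (K u * K u)))
        + α₁^2 * (u^2 * (K u * K u)) := fun u => by simp only [hQ_def]; ring
    have e0 : (∫ u, Q u) = ∫ u, (α₀^2 * (K u * K u) + (2*α₀*α₁) * (u * (K u * K u)))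
        + α₁^2 * (u^2 * (K u * K u)) := integral_congr_ae (ae_of_all _ hexp)
    have e1 : (∫ u, (α₀^2 * (K u * K u) + (2*α₀*α₁) * (u * (K u * K u)))
          + α₁^2 * (u^2 * (K u * K u)))
        = (∫ u, α₀^2 * (K u * K u) + (2*α₀*α₁) * (u * (K u * K u)))
          + ∫ u, α₁^2 * (u^2 * (K u * K u)) :=
      integral_add ((hI1.const_mul _).add (hIu.const_mul _)) (hIu2.const_mul _)
    have e2 : (∫ u, α₀^2 * (K u * K u) + (2*α₀*α₁) * (u * (K u * K u)))
        = (∫ u, α₀^2 * (K u * K u)) + ∫ u, (2*α₀*α₁) * (u * (K u * K u)) :=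
      integral_add (hI1.const_mul _) (hIu.const_mul _)
    rw [e0, e1, e2, integral_const_mul, integral_const_mul, integral_const_mul, hodd,
      mul_zero, add_zero]
  have hR2 : (∫ u, (K u)^2) = ∫ u, K u * K u :=
    integral_congr_ae (ae_of_all _ fun u => by ring)
  have hM2 : (∫ u, u^2 * (K u)^2) = ∫ u, u^2 * (K u * K u) :=
    integral_congr_ae (ae_of_all _ fun u => by ring)
  have hchg : ∀ h : ℝ, 0 < h →
      h * (∫ t, f t * (g h t * g h t)) = ∫ u, Q u * f (x + h*u) := by
    intro h hh
    have hne : h ≠ 0 := ne_of_gt hh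
    set W : ℝ → ℝ := fun s => f (x + s) * (g h (x + s) * g h (x + s)) with hW_def
    have h1 : (∫ t, f t * (g h t * g h t)) = ∫ t, W (t - x) := by
      refine integral_congr_ae (ae_of_all _ fun t => ?_)
      simp only [hW_def, add_sub_cancel]
    have h2 : (∫ t, W (t - x)) = ∫ s, W s := integral_sub_right_eq_self W x
    have h3 : (∫ u, W (h * u)) = |h⁻¹| • ∫ s, W s :=
      MeasureTheory.Measure.integral_comp_mul_left W h
    have h4 : ∀ u : ℝ, W (h * u) = h⁻¹ * (h⁻¹ * (Q u * f (x + h*u))) := by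
      intro u
      have hcancel : (x + h*u - x)/h = u := by field_simp; ring
      simp only [hW_def, hg_def, hQ_def, hcancel]
      ring
    have h5 : (∫ u, W (h*u)) = h⁻¹ * (h⁻¹ * ∫ u, Q u * f (x + h*u)) := by
      rw [integral_congr_ae (ae_of_all _ h4), integral_const_mul, integral_const_mul]
    have h6 : h⁻¹ * (∫ s, W s) = h⁻¹ * (h⁻¹ * ∫ u, Q u * f (x + h*u)) := by
      rw [← h5, h3, abs_of_pos (inv_pos.2 hh), smul_eq_mul]
    have h7 : (∫ s, W s) = h⁻¹ * ∫ u, Q u * f (x + h*u) :=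
      mul_left_cancel₀ (inv_ne_zero hne) h6
    rw [h1, h2, h7, ← mul_assoc, mul_inv_cancel₀ hne, one_mul]
  have hQf_int : ∀ h : ℝ, 0 < h → Integrable (fun u => Q u * f (x + h*u)) := by
    intro h hh
    refine aux_integrable_of_indicator_bound (B := A^2*CK^2 * (f x + Cf * h))
      (hQ_meas.mul (hf_meas.comp
        (measurable_const.add (measurable_id.const_mul h)))).aestronglyMeasurable
      (fun u => ?_)
    by_cases hu : u ∈ Set.Icc (-1:ℝ) 1
    · rw [Set.indicator_of_mem hu]
      simp only [Real.norm_eq_abs]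
      rw [abs_mul]
      have h1 : |Q u| ≤ A^2*CK^2 := by
        have h := hQ_bd u; rwa [Set.indicator_of_mem hu] at h
      have h2 : |f (x+h*u) - f x| ≤ Cf * h := by
        calc |f (x+h*u) - f x| ≤ Cf * |x + h*u - x| := hf_lip _ _
          _ = Cf * (h * |u|) := by rw [add_sub_cancel_left, abs_mul, abs_of_pos hh]
          _ ≤ Cf * (h * 1) := mul_le_mul_of_nonneg_left
              (mul_le_mul_of_nonneg_left (abs_le.2 ⟨hu.1, hu.2⟩) hh.le) hCf0
          _ = Cf * h := by ring
      have h3 : |f (x+h*u)| ≤ f x + Cf * h := by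
        rw [abs_of_nonneg (hf_nonneg _)]
        have := abs_sub_le_iff.1 h2
        linarith [this.1]
      exact mul_le_mul h1 h3 (abs_nonneg _) (by positivity)
    · rw [Set.indicator_of_notMem hu]
      simp [hQ_zero u hu]
  have hsplit : ∀ h : ℝ, 0 < h → (∫ u, Q u * f (x+h*u)) - (∫ u, Q u) * f x
      = ∫ u, Q u * (f (x+h*u) - f x) := by
    intro h hh
    have hD : (∫ u, Q u * (f (x+h*u) - f x))
        = (∫ u, Q u * f (x+h*u)) - ∫ u, Q u * f x := by
      rw [← integral_sub (hQf_int h hh) (hQ_int.mul_const (f x))]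
      exact integral_congr_ae (ae_of_all _ fun u => by ring)
    rw [hD, integral_mul_const]
  have hDbound : ∀ h : ℝ, 0 < h →
      |∫ u, Q u * (f (x+h*u) - f x)| ≤ 2 * (A^2*CK^2*Cf*h) := by
    intro h hh
    have hb : ∀ u, ‖Q u * (f (x+h*u) - f x)‖
        ≤ Set.indicator (Set.Icc (-1:ℝ) 1) (fun _ => A^2*CK^2*(Cf*h)) u := by
      intro u
      by_cases hu : u ∈ Set.Icc (-1:ℝ) 1
      · rw [Set.indicator_of_mem hu]
        simp only [Real.norm_eq_abs]
        rw [abs_mul]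
        have h1 : |Q u| ≤ A^2*CK^2 := by
          have h' := hQ_bd u; rwa [Set.indicator_of_mem hu] at h'
        have h2 : |f (x+h*u) - f x| ≤ Cf * h := by
          calc |f (x+h*u) - f x| ≤ Cf * |x + h*u - x| := hf_lip _ _
            _ = Cf * (h * |u|) := by rw [add_sub_cancel_left, abs_mul, abs_of_pos hh]
            _ ≤ Cf * (h * 1) := mul_le_mul_of_nonneg_left
                (mul_le_mul_of_nonneg_left (abs_le.2 ⟨hu.1, hu.2⟩) hh.le) hCf0
            _ = Cf * h := by ring
        exact mul_le_mul h1 h2 (abs_nonneg _) (by positivity)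
      · rw [Set.indicator_of_notMem hu]
        simp [hQ_zero u hu]
    have hnorm := norm_integral_le_of_norm_le
      (aux_integrable_indicator (A^2*CK^2*(Cf*h))) (ae_of_all _ hb)
    rw [aux_integral_indicator, Real.norm_eq_abs] at hnorm
    calc |∫ u, Q u * (f (x+h*u) - f x)| ≤ 2 * (A^2*CK^2*(Cf*h)) := hnorm
      _ = 2 * (A^2*CK^2*Cf*h) := by ring
  -- assembly
  have hC0 : 0 ≤ 2*(A^2*CK^2*Cf)*m₂ := by
    apply mul_nonneg _ hm₂_nonneg
    have hAC : (0:ℝ) ≤ A^2*CK^2 := by positivity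
    nlinarith
  refine ⟨hmean, 2*(A^2*CK^2*Cf)*m₂ + 1, by linarith, 1, fun n hn1 => ?_⟩
  have hh : 0 < hn n := hh_pos n
  have hT : (α₀ ^ 2 * (∫ u, (K u)^2) + α₁ ^ 2 * (∫ u, u^2 * (K u)^2)) = ∫ u, Q u := by
    rw [hR2, hM2]; exact hQint_eq.symm
  rw [hvar n hn1, hT]
  rw [show hn n * ((∫ t, f t * (g (hn n) t * g (hn n) t)) * m₂)
      = (hn n * (∫ t, f t * (g (hn n) t * g (hn n) t))) * m₂ by ring,
    hchg (hn n) hh]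
  rw [show (∫ u, Q u * f (x + hn n*u)) * m₂ - (∫ u, Q u) * f x * m₂
      = ((∫ u, Q u * f (x + hn n*u)) - (∫ u, Q u) * f x) * m₂ by ring,
    abs_mul, abs_of_nonneg hm₂_nonneg, hsplit (hn n) hh]
  calc |∫ u, Q u * (f (x + hn n*u) - f x)| * m₂ ≤ (2*(A^2*CK^2*Cf*hn n)) * m₂ :=
      mul_le_mul_of_nonneg_right (hDbound (hn n) hh) hm₂_nonneg
    _ = (2*(A^2*CK^2*Cf)*m₂) * hn n := by ring
    _ ≤ (2*(A^2*CK^2*Cf)*m₂ + 1) * hn n := by nlinarith
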